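/- Rank decomposition under partialling out. Assume Dᵀ*D is invertible. Then the rank of the concatenated n×(2N+M) matrix [J, G, D] equals the rank of D plus the rank of the concatenated n×2N matrix [W*J, W*G]. -/

import Mathlib

open Matrix Module

lemma range_fromColumns_mulVecLin {m n₁ n₂ : Type*} [Fintype n₁] [Fintype n₂]
    (A : Matrix m n₁ ℝ) (B : Matrix m n₂ ℝ) :
    LinearMap.range (fromCols A B).mulVecLin
      = LinearMap.range A.mulVecLin ⊔ LinearMap.range B.mulVecLin := by
  apply le_antisymm
  · rintro x ⟨v, rfl⟩
    have hv : v = Sum.elim (v ∘ Sum.inl) (v ∘ Sum.inr) := by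
      ext (i | i) <;> rfl
    rw [mulVecLin_apply, hv, fromCols_mulVec_sumElim]
    exact Submodule.add_mem_sup ⟨v ∘ Sum.inl, rfl⟩ ⟨v ∘ Sum.inr, rfl⟩
  · rw [sup_le_iff]
    constructor
    · rintro x ⟨v, rfl⟩
      exact ⟨Sum.elim v 0, by simp [mulVecLin_apply]⟩
    · rintro x ⟨v, rfl⟩
      exact ⟨Sum.elim 0 v, by simp [mulVecLin_apply]⟩

/-- Rank decomposition under partialling out: rank([J, G, D]) = rank(D) + rank([WJ, WG]),
where W = 1 - D(DᵀD)⁻¹Dᵀ is the annihilator of D. -/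
theorem rank_decomposition_partialling_out
    (n N M : ℕ) (hn : 0 < n) (hN : 0 < N) (hM : 0 < M)
    (J G : Matrix (Fin n) (Fin N) ℝ) (D : Matrix (Fin n) (Fin M) ℝ)
    (hDD : IsUnit (Dᵀ * D))
    (W : Matrix (Fin n) (Fin n) ℝ)
    (hW : W = 1 - D * (Dᵀ * D)⁻¹ * Dᵀ) :
    (Matrix.fromCols J (Matrix.fromCols G D)).rank
      = D.rank + (Matrix.fromCols (W * J) (W * G)).rank := by
  have hdet : IsUnit (Dᵀ * D).det := (Matrix.isUnit_iff_isUnit_det _).mp hDD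
  have hinv : (Dᵀ * D)⁻¹ * (Dᵀ * D) = 1 := Matrix.nonsing_inv_mul _ hdet
  have hWD : W * D = 0 := by
    rw [hW]
    have h : D * (Dᵀ * D)⁻¹ * Dᵀ * D = D * ((Dᵀ * D)⁻¹ * (Dᵀ * D)) := by
      rw [← Matrix.mul_assoc, ← Matrix.mul_assoc]
    rw [Matrix.sub_mul, Matrix.one_mul, h, hinv, Matrix.mul_one, sub_self]
  -- kernel of W equals range of D
  have hker : LinearMap.ker W.mulVecLin = LinearMap.range D.mulVecLin := by
    apply le_antisymm
    · intro x hx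
      have hx' : W *ᵥ x = 0 := hx
      refine ⟨((Dᵀ * D)⁻¹ * Dᵀ) *ᵥ x, ?_⟩
      show D *ᵥ (((Dᵀ * D)⁻¹ * Dᵀ) *ᵥ x) = x
      rw [Matrix.mulVec_mulVec, ← Matrix.mul_assoc]
      have h2 : x - (D * (Dᵀ * D)⁻¹ * Dᵀ) *ᵥ x = 0 := by
        have h1 : (1 - D * (Dᵀ * D)⁻¹ * Dᵀ) *ᵥ x = 0 := by rwa [← hW]
        simpa [Matrix.sub_mulVec] using h1
      have := sub_eq_zero.mp h2
      exact this.symm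
    · rintro x ⟨v, rfl⟩
      have h : W *ᵥ (D *ᵥ v) = (W * D) *ᵥ v := (Matrix.mulVec_mulVec _ _ _)
      simp [LinearMap.mem_ker, mulVecLin_apply, h, hWD]
  set U : Submodule ℝ (Fin n → ℝ) :=
    LinearMap.range J.mulVecLin ⊔ LinearMap.range G.mulVecLin with hU
  set V : Submodule ℝ (Fin n → ℝ) := LinearMap.range D.mulVecLin with hV
  set S : Submodule ℝ (Fin n → ℝ) := U ⊔ V with hS
  have hSrange : LinearMap.range (fromCols J (fromCols G D)).mulVecLin = S := by
    rw [range_fromColumns_mulVecLin, range_fromColumns_mulVecLin, hS, hU, hV, sup_assoc]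
  set f := W.mulVecLin with hf
  -- image of S under f
  have hmapV : V.map f = ⊥ := by
    rw [Submodule.eq_bot_iff]
    rintro x ⟨y, hy, rfl⟩
    have : y ∈ LinearMap.ker f := hker ▸ hy
    exact this
  have hmapJ : (LinearMap.range J.mulVecLin).map f = LinearMap.range (W * J).mulVecLin := by
    rw [mulVecLin_mul, LinearMap.range_comp]
  have hmapG : (LinearMap.range G.mulVecLin).map f = LinearMap.range (W * G).mulVecLin := by
    rw [mulVecLin_mul, LinearMap.range_comp]
  have hmapS : S.map f = LinearMap.range (fromCols (W * J) (W * G)).mulVecLin := by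
    rw [range_fromColumns_mulVecLin, hS, Submodule.map_sup, hmapV, sup_bot_eq, hU,
      Submodule.map_sup, hmapJ, hmapG]
  -- kernel of restriction
  have hVS : V ≤ S := le_sup_right
  have hkerRes : LinearMap.ker (f.domRestrict S) = Submodule.comap S.subtype V := by
    rw [LinearMap.ker_domRestrict, hker]
  have hfinkerRes : finrank ℝ (LinearMap.ker (f.domRestrict S)) = finrank ℝ V := by
    rw [hkerRes]
    exact LinearEquiv.finrank_eq (Submodule.comapSubtypeEquivOfLe hVS)
  have hRN := LinearMap.finrank_range_add_finrank_ker (f.domRestrict S)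
  rw [LinearMap.range_domRestrict, hmapS, hfinkerRes] at hRN
  rw [Matrix.rank, Matrix.rank, Matrix.rank, hSrange, ← hRN, ← hV]
  exact (add_comm _ _)
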